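/- Let G be a finitely generated group which is not finitely presented (i.e., for no finite generating tuple A is the kernel of the canonical surjection F_A → G the normal closure of a finite set). Then for every nondecreasing function f with f ≪ 𝔦, G does not admit a quasigeodesic normal form satisfying the f(n)-fellow traveler property. Equivalently, if a finitely generated group admits a quasigeodesic normal form satisfying the f(n)-fellow traveler property for some f ≪ 𝔦, then it is finitely presented. -/

import Mathlib

/-- The alphabet `S = A ∪ A⁻¹` for a generating tuple of `m` elements:
a letter is a generator index together with a sign (`true` = the generator,
`false` = its inverse). -/
abbrev Letter (m : ℕ) := Fin m × Bool

/-- Evaluation of a letter in the group. -/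
def evalLetter {G : Type*} [Group G] {m : ℕ} (A : Fin m → G) (l : Letter m) : G :=
  if l.2 then A l.1 else (A l.1)⁻¹

/-- The canonical projection `π : S* → G`. -/
def wordEval {G : Type*} [Group G] {m : ℕ} (A : Fin m → G) (w : List (Letter m)) : G :=
  (w.map (evalLetter A)).prod

/-- The word metric `d_A` on `G` relative to `A`. -/
noncomputable def wordDist {G : Type*} [Group G] {m : ℕ} (A : Fin m → G) (g h : G) : ℕ :=
  sInf {n | ∃ w : List (Letter m), wordEval A w = g⁻¹ * h ∧ w.length = n}

/-- `L ⊆ S*` is a normal form of `G`: `π` restricted to `L` is a bijection onto `G`. -/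
def IsNormalForm {G : Type*} [Group G] {m : ℕ} (A : Fin m → G)
    (L : Set (List (Letter m))) : Prop :=
  ∀ g : G, ∃! w, w ∈ L ∧ wordEval A w = g

/-- The fellow-traveler function `s(n)` of a normal form `L`. -/
noncomputable def ftFun {G : Type*} [Group G] {m : ℕ} (A : Fin m → G)
    (L : Set (List (Letter m))) (n : ℕ) : ℕ :=
  sSup {d | ∃ t ≤ n, ∃ w₁ ∈ L, ∃ w₂ ∈ L, ∃ i : Fin m,
    wordEval A w₁ * A i = wordEval A w₂ ∧
    d = wordDist A (wordEval A (w₁.take t)) (wordEval A (w₂.take t))}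

/-- `h ⪯ f` : there are positive integers `K, M` and `N₀ ≥ 0` with
`h n ≤ K * f (M * n)` for all `n ≥ N₀`. -/
def FPreceq (h f : ℕ → ℝ) : Prop :=
  ∃ K M N₀ : ℕ, 0 < K ∧ 0 < M ∧ ∀ n ≥ N₀, h n ≤ (K : ℝ) * f (M * n)

/-- `h ≪ f` : there is an unbounded nondecreasing nonnegative function `t`
with `h·t ⪯ f`. -/
def FLl (h f : ℕ → ℝ) : Prop :=
  ∃ t : ℕ → ℝ, Monotone t ∧ (∀ n, 0 ≤ t n) ∧ (∀ C : ℝ, ∃ n, C < t n) ∧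
    FPreceq (fun n => h n * t n) f

/-- A normal form is quasigeodesic if `|w| ≤ C (d_A(π(w)) + 1)` for all `w ∈ L`. -/
def Quasigeodesic {G : Type*} [Group G] {m : ℕ} (A : Fin m → G)
    (L : Set (List (Letter m))) : Prop :=
  ∃ C : ℝ, 0 < C ∧ ∀ w ∈ L, (w.length : ℝ) ≤ C * ((wordDist A 1 (wordEval A w) : ℝ) + 1)

/-- A normal form is quasiregular with constant `c` if every prefix of a word of `L`
can be extended by a word of length at most `c` to a word of `L`. -/
def Quasiregular {m : ℕ} (L : Set (List (Letter m))) (c : ℕ) : Prop :=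
  ∀ w ∈ L, ∀ u : List (Letter m), u <+: w → ∃ x : List (Letter m), x.length ≤ c ∧ u ++ x ∈ L

/-- A normal form is quasiprefix-closed with constant `C`. -/
def QuasiPrefixClosed {m : ℕ} (L : Set (List (Letter m))) (C : ℕ) : Prop :=
  ∀ u v : List (Letter m), u ++ v ∈ L →
    ∃ x : List (Letter m), x <+: v ∧ x.length ≤ C ∧ u ++ x ∈ L

/-- A language is prefix-closed. -/
def PrefixClosed {m : ℕ} (L : Set (List (Letter m))) : Prop :=
  ∀ w ∈ L, ∀ u : List (Letter m), u <+: w → u ∈ L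


namespace NQG
variable {G : Type*} [Group G] {m : ℕ} (A : Fin m → G)

def invWord (w : List (Letter m)) : List (Letter m) := (w.map (fun l => (l.1, !l.2))).reverse

@[simp] lemma wordEval_nil : wordEval A ([] : List (Letter m)) = 1 := rfl

@[simp] lemma wordEval_append (u v : List (Letter m)) :
    wordEval A (u ++ v) = wordEval A u * wordEval A v := by
  simp [wordEval]

@[simp] lemma wordEval_singleton (a : Letter m) : wordEval A [a] = evalLetter A a := by
  simp [wordEval]

@[simp] lemma evalLetter_neg (l : Letter m) : evalLetter A (l.1, !l.2) = (evalLetter A l)⁻¹ := by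
  cases l with
  | mk i b => cases b <;> simp [evalLetter]

@[simp] lemma invWord_length (w : List (Letter m)) : (invWord w).length = w.length := by
  simp [invWord]

@[simp] lemma wordEval_invWord (w : List (Letter m)) :
    wordEval A (invWord w) = (wordEval A w)⁻¹ := by
  induction w with
  | nil => simp [invWord]
  | cons a w ih =>
      have : invWord (a :: w) = invWord w ++ [(a.1, !a.2)] := by simp [invWord]
      rw [this, wordEval_append, ih]
      have : wordEval A (a :: w) = evalLetter A a * wordEval A w := by simp [wordEval]
      rw [this]
      simp [mul_inv_rev]

@[simp] lemma lift_mk (w : List (Letter m)) :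
    FreeGroup.lift A (FreeGroup.mk w) = wordEval A w := by
  rw [FreeGroup.lift_mk]
  unfold wordEval
  congr 1
  apply List.map_congr_left
  intro l _
  cases l with
  | mk i b => cases b <;> simp [evalLetter]

lemma wordDist_le {g h : G} {w : List (Letter m)} (hw : wordEval A w = g⁻¹ * h) :
    wordDist A g h ≤ w.length := Nat.sInf_le ⟨w, hw, rfl⟩

lemma wordDist_nonempty (hsurj : ∀ g : G, ∃ w : List (Letter m), wordEval A w = g) (g h : G) :
    {n | ∃ w : List (Letter m), wordEval A w = g⁻¹ * h ∧ w.length = n}.Nonempty := by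
  obtain ⟨w, hw⟩ := hsurj (g⁻¹ * h)
  exact ⟨w.length, w, hw, rfl⟩

lemma exists_word_wordDist (hsurj : ∀ g : G, ∃ w : List (Letter m), wordEval A w = g) (g h : G) :
    ∃ w : List (Letter m), wordEval A w = g⁻¹ * h ∧ w.length = wordDist A g h :=
  Nat.sInf_mem (wordDist_nonempty A hsurj g h)

lemma wordDist_symm (hsurj : ∀ g : G, ∃ w : List (Letter m), wordEval A w = g) (g h : G) :
    wordDist A g h = wordDist A h g := by
  have key : ∀ g h : G, wordDist A h g ≤ wordDist A g h := by
    intro g h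
    obtain ⟨w, hw, hl⟩ := exists_word_wordDist A hsurj g h
    have : wordEval A (invWord w) = h⁻¹ * g := by rw [wordEval_invWord, hw]; group
    calc wordDist A h g ≤ (invWord w).length := wordDist_le A this
    _ = w.length := invWord_length w
    _ = _ := hl
  exact le_antisymm (key h g) (key g h)


variable {G : Type*} [Group G] {m : ℕ} (A : Fin m → G)
lemma ftSet_bddAbove (L : Set (List (Letter m))) (n : ℕ) :
    BddAbove {d | ∃ t ≤ n, ∃ w₁ ∈ L, ∃ w₂ ∈ L, ∃ i : Fin m,
      wordEval A w₁ * A i = wordEval A w₂ ∧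
      d = wordDist A (wordEval A (w₁.take t)) (wordEval A (w₂.take t))} := by
  refine ⟨2 * n, ?_⟩
  rintro d ⟨t, ht, w₁, _, w₂, _, i, _, rfl⟩
  have : wordEval A (invWord (w₁.take t) ++ w₂.take t)
      = (wordEval A (w₁.take t))⁻¹ * wordEval A (w₂.take t) := by
    rw [wordEval_append, wordEval_invWord]
  calc wordDist A (wordEval A (w₁.take t)) (wordEval A (w₂.take t))
      ≤ (invWord (w₁.take t) ++ w₂.take t).length := wordDist_le A this
    _ = (w₁.take t).length + (w₂.take t).length := by
        rw [List.length_append, invWord_length]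
    _ ≤ t + t := by
        gcongr <;> exact List.length_take_le _ _
    _ ≤ 2 * n := by omega

lemma dist_take_le_ftFun (hsurj : ∀ g : G, ∃ w : List (Letter m), wordEval A w = g)
    {L : Set (List (Letter m))} {u v : List (Letter m)} {a : Letter m} {n' : ℕ}
    (hu : u ∈ L) (hv : v ∈ L)
    (ha : wordEval A u * evalLetter A a = wordEval A v) {t : ℕ} (ht : t ≤ n') :
    wordDist A (wordEval A (u.take t)) (wordEval A (v.take t)) ≤ ftFun A L n' := by
  apply le_csSup (ftSet_bddAbove A L n')
  rcases a with ⟨i, b⟩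
  cases b
  · -- negative letter : wordEval v * A i = wordEval u
    refine ⟨t, ht, v, hv, u, hu, i, ?_, ?_⟩
    · have : evalLetter A ((i, false) : Letter m) = (A i)⁻¹ := by simp [evalLetter]
      rw [this] at ha
      rw [← ha]; group
    · exact wordDist_symm A hsurj _ _
  · refine ⟨t, ht, u, hu, v, hv, i, ?_, rfl⟩
    have : evalLetter A ((i, true) : Letter m) = A i := by simp [evalLetter]
    rwa [this] at ha

variable {G : Type*} [Group G] {m : ℕ} (A : Fin m → G)
/-- The ladder lemma: if `u, v` fellow-travel within `D` and differ by letter `a`,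
and all short relations lie in `NC`, then `u·a·v⁻¹ ∈ NC`. -/
lemma ladder (hsurj : ∀ g : G, ∃ w : List (Letter m), wordEval A w = g)
    {u v : List (Letter m)} {a : Letter m} {D : ℕ}
    (ha : wordEval A u * evalLetter A a = wordEval A v)
    (hD : ∀ j, j ≤ max u.length v.length →
      wordDist A (wordEval A (u.take j)) (wordEval A (v.take j)) ≤ D)
    (NC : Subgroup (FreeGroup (Fin m))) [hNCn : NC.Normal]
    (hcell : ∀ x : List (Letter m), x.length ≤ 2 * D + 2 → wordEval A x = 1 →
      FreeGroup.mk x ∈ NC) :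
    FreeGroup.mk u * FreeGroup.mk [a] * (FreeGroup.mk v)⁻¹ ∈ NC := by
  classical
  set T := max u.length v.length with hT
  -- choose geodesic connecting words
  have hp : ∀ j : ℕ, ∃ p : List (Letter m),
      wordEval A p = (wordEval A (u.take j))⁻¹ * wordEval A (v.take j) ∧
      p.length = wordDist A (wordEval A (u.take j)) (wordEval A (v.take j)) :=
    fun j => exists_word_wordDist A hsurj _ _
  choose p hpe hpl using hp
  have hplen : ∀ j, j ≤ T → (p j).length ≤ D := fun j hj => (hpl j) ▸ hD j hj
  -- the ladder induction
  have key : ∀ j, j ≤ T →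
      FreeGroup.mk (u.take j) * FreeGroup.mk (p j) * (FreeGroup.mk (v.take j))⁻¹ ∈ NC := by
    intro j
    induction j with
    | zero =>
        intro _
        simp only [List.take_zero]
        have h0 : FreeGroup.mk (p 0) ∈ NC := by
          apply hcell
          · exact (hplen 0 (Nat.zero_le _)).trans (by omega)
          · rw [hpe 0]; simp [List.take_zero, wordEval_nil]
        have : FreeGroup.mk ([] : List (Letter m)) = 1 := rfl
        rw [this]
        simpa using h0
    | succ j ih =>
        intro hj1
        have hj : j ≤ T := by omega
        have hprev := ih hj
        set x := (u.drop j).take 1 with hx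
        set y := (v.drop j).take 1 with hy
        have hux : u.take (j+1) = u.take j ++ x := List.take_add (l := u) (i := j) (j := 1)
        have hvy : v.take (j+1) = v.take j ++ y := List.take_add (l := v) (i := j) (j := 1)
        -- the cell
        set c := x ++ p (j+1) ++ invWord y ++ invWord (p j) with hc
        have hclen : c.length ≤ 2 * D + 2 := by
          have h1 : x.length ≤ 1 := List.length_take_le _ _
          have h2 : y.length ≤ 1 := List.length_take_le _ _
          have h3 := hplen (j+1) hj1
          have h4 := hplen j hj
          simp only [hc, List.length_append, invWord_length]
          omega
        have hceval : wordEval A c = 1 := by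
          have e1 : wordEval A (u.take (j+1)) = wordEval A (u.take j) * wordEval A x := by
            rw [hux, wordEval_append]
          have e2 : wordEval A (v.take (j+1)) = wordEval A (v.take j) * wordEval A y := by
            rw [hvy, wordEval_append]
          have e3 := hpe j
          have e4 := hpe (j+1)
          rw [hc, wordEval_append, wordEval_append, wordEval_append,
            wordEval_invWord, wordEval_invWord, e3, e4, e1, e2]
          group
        have hcE : FreeGroup.mk c ∈ NC := hcell c hclen hceval
        -- algebra
        have hinv : ∀ w : List (Letter m), FreeGroup.mk (invWord w) = (FreeGroup.mk w)⁻¹ :=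
          fun w => (FreeGroup.inv_mk).symm
        have hmkc : FreeGroup.mk c = FreeGroup.mk x * FreeGroup.mk (p (j+1)) *
            (FreeGroup.mk y)⁻¹ * (FreeGroup.mk (p j))⁻¹ := by
          rw [hc, ← FreeGroup.mul_mk, ← FreeGroup.mul_mk, ← FreeGroup.mul_mk, hinv, hinv]
        rw [hux, hvy, ← FreeGroup.mul_mk, ← FreeGroup.mul_mk]
        have halg : FreeGroup.mk (u.take j) * FreeGroup.mk x *
            FreeGroup.mk (p (j+1)) *
            (FreeGroup.mk (v.take j) * FreeGroup.mk y)⁻¹ =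
            (FreeGroup.mk (u.take j) * FreeGroup.mk c * (FreeGroup.mk (u.take j))⁻¹) *
            (FreeGroup.mk (u.take j) * FreeGroup.mk (p j) * (FreeGroup.mk (v.take j))⁻¹) := by
          rw [hmkc]; group
        rw [halg]
        exact mul_mem (hNCn.conj_mem _ hcE _) hprev
  -- conclude at j = T
  have hfin := key T le_rfl
  rw [List.take_of_length_le (le_max_left _ _), List.take_of_length_le (le_max_right _ _)] at hfin
  -- correction cell
  have hinv : ∀ w : List (Letter m), FreeGroup.mk (invWord w) = (FreeGroup.mk w)⁻¹ :=
    fun w => (FreeGroup.inv_mk).symm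
  set c2 := invWord (p T) ++ [a] with hc2
  have hc2len : c2.length ≤ 2 * D + 2 := by
    have := hplen T le_rfl
    simp only [hc2, List.length_append, invWord_length, List.length_singleton]
    omega
  have hc2eval : wordEval A c2 = 1 := by
    have := hpe T
    rw [List.take_of_length_le (le_max_left _ _),
      List.take_of_length_le (le_max_right _ _)] at this
    rw [hc2, wordEval_append, wordEval_invWord, this, wordEval_singleton]
    rw [← ha]; group
  have hc2E : FreeGroup.mk c2 ∈ NC := hcell c2 hc2len hc2eval
  have hmkc2 : FreeGroup.mk c2 = (FreeGroup.mk (p T))⁻¹ * FreeGroup.mk [a] := by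
    rw [hc2, ← FreeGroup.mul_mk, hinv]
  have halg : FreeGroup.mk u * FreeGroup.mk [a] * (FreeGroup.mk v)⁻¹ =
      (FreeGroup.mk u * FreeGroup.mk (p T) * (FreeGroup.mk v)⁻¹) *
      (FreeGroup.mk v * FreeGroup.mk c2 * (FreeGroup.mk v)⁻¹) := by
    rw [hmkc2]; group
  rw [halg]
  exact mul_mem hfin (hNCn.conj_mem _ hc2E _)
variable {G : Type*} [Group G] {m : ℕ} (A : Fin m → G)
lemma main {L : Set (List (Letter m))} (hNF : IsNormalForm A L)
    {C₀ : ℕ}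
    (hQG : ∀ w ∈ L, w.length ≤ C₀ * (wordDist A 1 (wordEval A w) + 1))
    {N₀ : ℕ}
    (hnum : ∀ n, N₀ < n → 2 * ftFun A L (C₀ * (n + 1)) + 2 < n) :
    ∀ w : List (Letter m), wordEval A w = 1 →
      FreeGroup.mk w ∈ Subgroup.normalClosure
        {g | ∃ x : List (Letter m), x.length ≤ N₀ ∧ wordEval A x = 1 ∧ FreeGroup.mk x = g} := by
  classical
  set NC := Subgroup.normalClosure
    {g : FreeGroup (Fin m) |
      ∃ x : List (Letter m), x.length ≤ N₀ ∧ wordEval A x = 1 ∧ FreeGroup.mk x = g} with hNC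
  have hNCn : NC.Normal := Subgroup.normalClosure_normal
  have hsurj : ∀ g : G, ∃ w : List (Letter m), wordEval A w = g := by
    intro g; obtain ⟨w, ⟨_, hw⟩, _⟩ := hNF g; exact ⟨w, hw⟩
  -- normal form function
  have hnf : ∀ g : G, ∃ w : List (Letter m), (w ∈ L ∧ wordEval A w = g) ∧
      ∀ w' : List (Letter m), w' ∈ L → wordEval A w' = g → w' = w := by
    intro g
    obtain ⟨w, hw, huniq⟩ := hNF g
    exact ⟨w, hw, fun w' h1 h2 => huniq w' ⟨h1, h2⟩⟩
  choose nf hnfL hnfuniq using hnf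
  suffices H : ∀ n : ℕ, ∀ w : List (Letter m), w.length ≤ n → wordEval A w = 1 →
      FreeGroup.mk w ∈ NC by
    intro w hw; exact H w.length w le_rfl hw
  intro n
  induction n using Nat.strong_induction_on with
  | _ n IH =>
    intro w hwn hweval
    by_cases hsmall : w.length ≤ N₀
    · exact Subgroup.subset_normalClosure ⟨w, hsmall, hweval, rfl⟩
    push_neg at hsmall
    set nn := w.length with hnn
    set n' := C₀ * (nn + 1) with hn'
    set D := ftFun A L n' with hD
    have hDsmall : 2 * D + 2 < nn := hnum nn hsmall
    have hcell : ∀ x : List (Letter m), x.length ≤ 2 * D + 2 → wordEval A x = 1 →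
        FreeGroup.mk x ∈ NC := by
      intro x hx hxe
      exact IH (nn - 1) (by omega) x (by omega) hxe
    -- length bound for normal forms of prefixes
    have hlen : ∀ t : ℕ, t ≤ nn → (nf (wordEval A (w.take t))).length ≤ n' := by
      intro t ht
      have h1 : wordDist A 1 (wordEval A (w.take t)) ≤ t := by
        have hw : wordEval A (w.take t) = (1 : G)⁻¹ * wordEval A (w.take t) := by group
        exact (wordDist_le A hw).trans ((List.length_take_le _ _).trans (le_refl t))
      calc (nf (wordEval A (w.take t))).length
          ≤ C₀ * (wordDist A 1 (wordEval A (nf (wordEval A (w.take t)))) + 1) :=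
            hQG _ ((hnfL _).1)
        _ = C₀ * (wordDist A 1 (wordEval A (w.take t)) + 1) := by rw [(hnfL _).2]
        _ ≤ C₀ * (nn + 1) := by
            have := h1.trans ht
            exact Nat.mul_le_mul_left _ (by omega)
        _ = n' := rfl
    -- telescoping
    have key : ∀ t : ℕ, t ≤ nn →
        FreeGroup.mk (nf 1) * FreeGroup.mk (w.take t) *
          (FreeGroup.mk (nf (wordEval A (w.take t))))⁻¹ ∈ NC := by
      intro t
      induction t with
      | zero =>
          intro _
          have e1 : wordEval A (w.take 0) = 1 := by simp [wordEval]
          have h2 : FreeGroup.mk (w.take 0) = 1 := rfl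
          rw [e1, h2]
          have h3 : FreeGroup.mk (nf 1) * 1 * (FreeGroup.mk (nf 1))⁻¹ = 1 := by group
          rw [h3]
          exact one_mem NC
      | succ t iht =>
          intro ht1
          have ht : t ≤ nn := by omega
          have hprev := iht ht
          -- the letter
          have hsplit : w.take (t + 1) = w.take t ++ (w.drop t).take 1 := List.take_add (l := w) (i := t) (j := 1)
          have hlen1 : ((w.drop t).take 1).length = 1 := by
            rw [List.length_take, List.length_drop]
            omega
          obtain ⟨a, haeq⟩ := List.length_eq_one_iff.mp hlen1
          have heval_step : wordEval A (w.take (t + 1)) =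
              wordEval A (w.take t) * evalLetter A a := by
            rw [hsplit, wordEval_append, haeq, wordEval_singleton]
          set u := nf (wordEval A (w.take t)) with hu
          set v := nf (wordEval A (w.take (t + 1))) with hv
          have ha : wordEval A u * evalLetter A a = wordEval A v := by
            rw [(hnfL _).2, (hnfL _).2, heval_step]
          have hmaxlen : max u.length v.length ≤ n' :=
            max_le (hlen t ht) (hlen (t + 1) ht1)
          have hDj : ∀ j, j ≤ max u.length v.length →
              wordDist A (wordEval A (u.take j)) (wordEval A (v.take j)) ≤ D := by
            intro j hj
            exact dist_take_le_ftFun A hsurj (hnfL _).1 (hnfL _).1 ha (hj.trans hmaxlen)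
          have hlad := ladder A hsurj ha hDj NC hcell
          have halg : FreeGroup.mk (nf 1) * FreeGroup.mk (w.take (t + 1)) *
              (FreeGroup.mk v)⁻¹ =
              (FreeGroup.mk (nf 1) * FreeGroup.mk (w.take t) * (FreeGroup.mk u)⁻¹) *
              (FreeGroup.mk u * FreeGroup.mk [a] * (FreeGroup.mk v)⁻¹) := by
            rw [hsplit, haeq, ← FreeGroup.mul_mk]; group
          rw [halg]
          exact mul_mem hprev hlad
    have hfin := key nn le_rfl
    rw [List.take_of_length_le le_rfl] at hfin
    rw [hweval] at hfin
    have : FreeGroup.mk w =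
        (FreeGroup.mk (nf 1))⁻¹ *
        (FreeGroup.mk (nf 1) * FreeGroup.mk w * (FreeGroup.mk (nf 1))⁻¹) *
        (FreeGroup.mk (nf 1)) := by group
    rw [this]
    simpa using hNCn.conj_mem _ hfin (FreeGroup.mk (nf 1))⁻¹
end NQG


/-- Let `G` be a finitely generated group which is not finitely presented: for no
finite generating tuple `B` is the kernel of the canonical surjection `F_B → G` the
normal closure of a finite set.  Then for every nondecreasing function `f` with
`f ≪ 𝔦`, `G` does not admit a quasigeodesic normal form satisfying the
`f(n)`-fellow traveler property. -/
theorem no_quasigeodesic_of_not_finitelyPresented {G : Type*} [Group G]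
    (hfg : ∃ (k : ℕ) (B : Fin k → G), Function.Surjective (FreeGroup.lift B))
    (hnfp : ∀ (k : ℕ) (B : Fin k → G), Function.Surjective (FreeGroup.lift B) →
      ¬ ∃ T : Set (FreeGroup (Fin k)), T.Finite ∧
          MonoidHom.ker (FreeGroup.lift B) = Subgroup.normalClosure T)
    {m : ℕ} (A : Fin m → G)
    (f : ℕ → ℝ) (hmono : Monotone f) (hnonneg : ∀ n, 0 ≤ f n)
    (hll : FLl f (fun n => (n : ℝ))) :
    ¬ ∃ L : Set (List (Letter m)),
        IsNormalForm A L ∧ Quasigeodesic A L ∧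
        FPreceq (fun n => (ftFun A L n : ℝ)) f := by
  classical
  rintro ⟨L, hNF, hQG, hFT⟩
  have hsurj : ∀ g : G, ∃ w : List (Letter m), wordEval A w = g := by
    intro g; obtain ⟨w, ⟨_, hw⟩, _⟩ := hNF g; exact ⟨w, hw⟩
  have hsurjlift : Function.Surjective (FreeGroup.lift A) := by
    intro g
    obtain ⟨w, hw⟩ := hsurj g
    exact ⟨FreeGroup.mk w, by rw [NQG.lift_mk]; exact hw⟩
  obtain ⟨C, hCpos, hCb⟩ := hQG
  set C₀ : ℕ := max 1 ⌈C⌉₊ with hC₀def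
  have hC₀ : 1 ≤ C₀ := le_max_left _ _
  have hCC₀ : C ≤ (C₀ : ℝ) := by
    calc C ≤ (⌈C⌉₊ : ℝ) := Nat.le_ceil C
    _ ≤ (C₀ : ℝ) := by exact_mod_cast le_max_right _ _
  have hQGnat : ∀ w ∈ L, w.length ≤ C₀ * (wordDist A 1 (wordEval A w) + 1) := by
    intro w hw
    have h1 : (w.length : ℝ) ≤ C * ((wordDist A 1 (wordEval A w) : ℝ) + 1) := hCb w hw
    have h2 : (w.length : ℝ) ≤ (C₀ : ℝ) * ((wordDist A 1 (wordEval A w) : ℝ) + 1) := by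
      refine h1.trans (mul_le_mul_of_nonneg_right hCC₀ (by positivity))
    have h3 : (w.length : ℝ) ≤ ((C₀ * (wordDist A 1 (wordEval A w) + 1) : ℕ) : ℝ) := by
      push_cast
      linarith
    exact_mod_cast h3
  obtain ⟨K, M, N, hK, hM, hFTb⟩ := hFT
  obtain ⟨t, htm, htnn, htu, K', M', N', hK', hM', hle⟩ := hll
  -- the numeric bound
  obtain ⟨N₀, hnum⟩ : ∃ N₀ : ℕ, ∀ n, N₀ < n → 2 * ftFun A L (C₀ * (n + 1)) + 2 < n := by
    set P : ℝ := (K : ℝ) * K' * M * M' * C₀ with hP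
    have hPpos : 0 < P := by
      have h1 := hK; have h2 := hK'; have h3 := hM; have h4 := hM'; have h5 := hC₀
      positivity
    obtain ⟨n₁, hn₁⟩ := htu (8 * P)
    refine ⟨N + N' + n₁ + 9, ?_⟩
    intro n hn
    set k := C₀ * (n + 1) with hk
    have hkn : n + 1 ≤ k := by
      calc n + 1 = 1 * (n + 1) := by ring
      _ ≤ C₀ * (n + 1) := Nat.mul_le_mul_right _ hC₀
    have hkN : N ≤ k := by omega
    set j := M * k with hj
    have hjk : k ≤ j := by
      calc k = 1 * k := by ring
      _ ≤ M * k := Nat.mul_le_mul_right _ hM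
    have hjN' : N' ≤ j := by omega
    have hjn₁ : n₁ ≤ j := by omega
    have h1 : ((ftFun A L k : ℕ) : ℝ) ≤ (K : ℝ) * f (M * k) := hFTb k hkN
    have h2 : f j * t j ≤ (K' : ℝ) * ((M' * j : ℕ) : ℝ) := hle j hjN'
    have h3 : 8 * P < t j := lt_of_lt_of_le hn₁ (htm hjn₁)
    have h4 : f j * (8 * P) ≤ f j * t j :=
      mul_le_mul_of_nonneg_left h3.le (hnonneg j)
    have hjr : ((j : ℕ) : ℝ) = (M : ℝ) * C₀ * (n + 1) := by
      rw [hj, hk]; push_cast; ring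
    have h5 : (K : ℝ) * ((K' : ℝ) * ((M' * j : ℕ) : ℝ)) = P * (n + 1) := by
      push_cast [hjr]
      rw [hP]; push_cast; ring
    have h6 : (K : ℝ) * (f j * (8 * P)) ≤ P * (n + 1) := by
      calc (K : ℝ) * (f j * (8 * P)) ≤ (K : ℝ) * (f j * t j) := by
            apply mul_le_mul_of_nonneg_left h4
            positivity
      _ ≤ (K : ℝ) * ((K' : ℝ) * ((M' * j : ℕ) : ℝ)) := by
            apply mul_le_mul_of_nonneg_left h2
            positivity
      _ = P * (n + 1) := h5
    have h7 : 8 * ((K : ℝ) * f j) ≤ (n : ℝ) + 1 := by nlinarith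
    have h8 : ((ftFun A L k : ℕ) : ℝ) ≤ ((n : ℝ) + 1) / 8 := by
      rw [hj] at h7
      linarith
    have h9 : (n : ℝ) ≥ 9 := by exact_mod_cast Nat.le_of_lt (by omega)
    have h10 : ((2 * ftFun A L k + 2 : ℕ) : ℝ) < (n : ℝ) := by push_cast; linarith
    exact_mod_cast h10
  -- the finite relator set
  set T : Set (FreeGroup (Fin m)) :=
    {g | ∃ x : List (Letter m), x.length ≤ N₀ ∧ wordEval A x = 1 ∧ FreeGroup.mk x = g}
    with hTdef
  have hTfin : T.Finite := by
    have hsub : T ⊆ FreeGroup.mk '' {x : List (Letter m) | x.length ≤ N₀} := by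
      rintro g ⟨x, hx1, _, rfl⟩
      exact ⟨x, hx1, rfl⟩
    exact ((List.finite_length_le (Letter m) N₀).image _).subset hsub
  refine hnfp m A hsurjlift ⟨T, hTfin, ?_⟩
  apply le_antisymm
  · -- ker ≤ normalClosure T
    intro g hg
    have hg1 : FreeGroup.lift A g = 1 := hg
    have heval : wordEval A g.toWord = 1 := by
      rw [← NQG.lift_mk A g.toWord, FreeGroup.mk_toWord]
      exact hg1
    have := NQG.main A hNF hQGnat hnum g.toWord heval
    rwa [FreeGroup.mk_toWord] at this
  · -- normalClosure T ≤ ker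
    apply Subgroup.normalClosure_le_normal
    rintro g ⟨x, _, hx1, rfl⟩
    have : FreeGroup.lift A (FreeGroup.mk x) = 1 := by rw [NQG.lift_mk]; exact hx1
    exact this
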